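/- Let d ≥ 1 and let b : {0,…,d−1} × {0,…,d−1} → ℤ≥0 ∪ {∞} be such that for every i there exists a finite sequence i = i_1, i_2, …, i_k = 0 in {0,…,d−1} with all b_{i_{ℓ+1} i_ℓ} finite. Let A = { a ∈ ℤ^d : a_0 = 0 and a_i − a_j ≤ b_{ij} for all i, j } (inequalities with b_{ij} = ∞ being vacuous). For each i define m_i as the maximum, over all finite sequences i = i_1, i_2, …, i_k = 0 in {0,…,d−1}, of ∑_{ℓ=1}^{k−1} (−b_{i_{ℓ+1} i_ℓ}). Then each m_i is a well-defined (attained, finite) maximum, the tuple m = (m_0, m_1, …, m_{d−1}) with m_0 = 0 belongs to A, and for every a ∈ A one has m_i ≤ a_i for all i; i.e., m is the componentwise minimum of A. -/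
import Mathlib


/-- The cost `∑_{ℓ=1}^{k-1} b_{i_{ℓ+1} i_ℓ}` of a sequence `i_1, …, i_k` of vertices,
with values in `WithTop ℤ` (`⊤` meaning some `b`-value along the sequence is infinite). -/
def pathCost {d : ℕ} (b : Fin (d + 1) → Fin (d + 1) → WithTop ℤ) :
    List (Fin (d + 1)) → WithTop ℤ
  | [] => 0
  | [_] => 0
  | i :: j :: rest => b j i + pathCost b (j :: rest)

/-- The set `A` of integral acceptable shiftings: `a_0 = 0` and `a_i - a_j ≤ b_{ij}` for all
`i, j` (constraints with `b_{ij} = ∞` are vacuous). -/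
def shiftingsSet {d : ℕ} (b : Fin (d + 1) → Fin (d + 1) → WithTop ℤ) :
    Set (Fin (d + 1) → ℤ) :=
  {a | a 0 = 0 ∧ ∀ i j, ((a i - a j : ℤ) : WithTop ℤ) ≤ b i j}

lemma pathCost_nonneg {d : ℕ} (b : Fin (d + 1) → Fin (d + 1) → WithTop ℤ)
    (hb : ∀ i j, 0 ≤ b i j) : ∀ l, 0 ≤ pathCost b l
  | [] => le_refl _
  | [_] => le_refl _
  | i :: j :: rest => by
      rw [pathCost]
      exact add_nonneg (hb j i) (pathCost_nonneg b hb (j :: rest))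

lemma path_bound {d : ℕ} (b : Fin (d + 1) → Fin (d + 1) → WithTop ℤ)
    (a : Fin (d + 1) → ℤ) (ha : ∀ i j, ((a i - a j : ℤ) : WithTop ℤ) ≤ b i j) :
    ∀ (l : List (Fin (d + 1))) (i j : Fin (d + 1)),
      l.head? = some i → l.getLast? = some j →
      ((a j - a i : ℤ) : WithTop ℤ) ≤ pathCost b l := by
  intro l
  induction l with
  | nil => intro i j h; simp at h
  | cons p rest ih =>
    intro i j hh hl
    simp only [List.head?_cons, Option.some.injEq] at hh
    subst hh
    match rest with
    | [] =>
      simp only [List.getLast?_singleton, Option.some.injEq] at hl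
      subst hl
      simp [pathCost]
    | q :: rest' =>
      rw [List.getLast?_cons_cons] at hl
      have h1 := ih q j (by simp) hl
      have h2 := ha q p
      rw [pathCost]
      rw [show a j - a p = (a q - a p) + (a j - a q) by ring, WithTop.coe_add]
      exact add_le_add h2 h1

/-- Let `d ≥ 1` and `b : {0,…,d-1}² → ℤ≥0 ∪ {∞}` be such that every vertex
is connected to `0` by a finite-cost sequence. Define `m_i` as the maximum over sequences
`i = i_1, …, i_k = 0` of `∑ (-b_{i_{ℓ+1} i_ℓ})`. Then each `m_i` is a well-defined attained
maximum, `m ∈ A` (with `m_0 = 0`), and `m` is the componentwise minimum of `A`. -/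
theorem statement4 (d : ℕ) (b : Fin (d + 1) → Fin (d + 1) → WithTop ℤ)
    (hb : ∀ i j, 0 ≤ b i j)
    (hconn : ∀ i : Fin (d + 1), ∃ l : List (Fin (d + 1)),
      l.head? = some i ∧ l.getLast? = some 0 ∧ pathCost b l ≠ ⊤) :
    ∃ m : Fin (d + 1) → ℤ,
      (∀ i, IsGreatest {s : ℤ | ∃ l : List (Fin (d + 1)),
          l.head? = some i ∧ l.getLast? = some 0 ∧
          pathCost b l = ((-s : ℤ) : WithTop ℤ)} (m i)) ∧
      m 0 = 0 ∧
      m ∈ shiftingsSet b ∧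
      ∀ a ∈ shiftingsSet b, ∀ i, m i ≤ a i := by
  set S : Fin (d + 1) → Set ℤ := fun i => {s : ℤ | ∃ l : List (Fin (d + 1)),
      l.head? = some i ∧ l.getLast? = some 0 ∧
      pathCost b l = ((-s : ℤ) : WithTop ℤ)} with hS
  have hub : ∀ i, ∀ s ∈ S i, s ≤ 0 := by
    intro i s hs
    obtain ⟨l, _, _, hc⟩ := hs
    have h0 := pathCost_nonneg b hb l
    rw [hc] at h0
    have : (0 : ℤ) ≤ -s := by exact_mod_cast h0
    omega
  have hgreat : ∀ i, ∃ mi, IsGreatest (S i) mi := by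
    intro i
    obtain ⟨l, h1, h2, h3⟩ := hconn i
    obtain ⟨c, hc⟩ := Option.ne_none_iff_exists.mp h3
    have hinh : ∃ s, s ∈ S i := ⟨-c, l, h1, h2, by rw [neg_neg, ← hc]; rfl⟩
    obtain ⟨mi, hmi, hmub⟩ := Int.exists_greatest_of_bdd ⟨0, hub i⟩ hinh
    exact ⟨mi, hmi, hmub⟩
  choose m hm using hgreat
  have hm0 : m 0 = 0 := by
    have hmem : (0 : ℤ) ∈ S 0 := ⟨[0], by simp, by simp, by simp [pathCost]⟩
    exact le_antisymm (hub 0 _ (hm 0).1) ((hm 0).2 hmem)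
  refine ⟨m, hm, hm0, ⟨hm0, ?_⟩, ?_⟩
  · intro i j
    rcases eq_or_ne (b i j) ⊤ with ht | ht
    · rw [ht]; exact le_top
    · obtain ⟨c, hc⟩ := Option.ne_none_iff_exists.mp ht
      obtain ⟨l, h1, h2, h3⟩ := (hm i).1
      cases l with
      | nil => simp at h1
      | cons p rest =>
        simp only [List.head?_cons, Option.some.injEq] at h1
        subst h1
        have hmem : m p - c ∈ S j := by
          refine ⟨j :: p :: rest, by simp, ?_, ?_⟩
          · rw [List.getLast?_cons_cons]; exact h2
          · rw [pathCost, h3, ← hc,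
              show -(m p - c) = c + -(m p) by ring, WithTop.coe_add]
            rfl
        have := (hm j).2 hmem
        rw [← hc]
        have hle : m p - m j ≤ c := by omega
        exact WithTop.coe_le_coe.mpr hle
  · rintro a ⟨ha0, ha⟩ i
    obtain ⟨l, h1, h2, h3⟩ := (hm i).1
    have := path_bound b a ha l i 0 h1 h2
    rw [h3, ha0] at this
    have : (0 : ℤ) - a i ≤ -(m i) := by exact_mod_cast this
    omega
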